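/- Under the assumption ∂²φ/∂(qε)∂θ̂ = 0, the signal ε_E(t+1) := Q(q⁻¹, θ̂) ε(t+1) + (1 - Q(q⁻¹, θ̂)) e(t+1), where Q(q⁻¹, θ̂) = 1 + θ̂ᵀ ∂φ/∂(qε), has a gradient with respect to θ̂ given by ∂ε_E(t+1)/∂θ̂ = -φ(t) + (∂Q/∂θ̂)(ε(t+1) - e(t+1)) = -φ(t) + (∂φ/∂(qε))(ε(t+1) - e(t+1)), and consequently the 'equivalent regressor' φ_E(t) := -∂ε_E(t+1)/∂θ̂ satisfies ∂φ_E(t)/∂θ̂ = 0. -/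

import Mathlib

noncomputable def embL (t : ℕ) : (Fin (t+1) → ℝ) →ₗ[ℝ] (ℕ → ℝ) where
  toFun v s := if h : s < t+1 then v ⟨s, h⟩ else 0
  map_add' v w := by funext s; by_cases h : s < t+1 <;> simp only [h, ↓reduceDIte, Pi.add_apply, add_zero]
  map_smul' c v := by funext s; by_cases h : s < t+1 <;> simp only [h, ↓reduceDIte, Pi.smul_apply, smul_eq_mul, mul_zero, RingHom.id_apply]

noncomputable def CL {n : ℕ} (M : (ℕ → ℝ) →ₗ[ℝ] (ℕ → Fin n → ℝ)) (t : ℕ) (i : Fin n) :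
    (Fin (t+1) → ℝ) →L[ℝ] ℝ :=
  LinearMap.toContinuousLinearMap
    ((LinearMap.proj i).comp ((LinearMap.proj t).comp (M.comp (embL t))))

lemma CL_apply {n : ℕ} (M : (ℕ → ℝ) →ₗ[ℝ] (ℕ → Fin n → ℝ)) (t : ℕ) (i : Fin n)
    (v : Fin (t+1) → ℝ) :
    CL M t i v = M (fun s => if h : s < t+1 then v ⟨s, h⟩ else 0) t i := rfl

lemma M_hasFDerivAt {n : ℕ} (M : (ℕ → ℝ) →ₗ[ℝ] (ℕ → Fin n → ℝ))
    (hMcausal : ∀ (t : ℕ) (x x' : ℕ → ℝ), (∀ s ≤ t, x s = x' s) → M x t = M x' t)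
    (t : ℕ) (i : Fin n) (f : (Fin n → ℝ) → ℕ → ℝ)
    (hf : ∀ s, Differentiable ℝ (fun θ => f θ s)) (θ : Fin n → ℝ) :
    HasFDerivAt (fun θ' => M (f θ') t i)
      ((CL M t i).comp
        (ContinuousLinearMap.pi (fun k : Fin (t+1) => fderiv ℝ (fun θ' => f θ' (k : ℕ)) θ))) θ := by
  have heq : (fun θ' => M (f θ') t i) = fun θ' => CL M t i (fun k : Fin (t+1) => f θ' (k : ℕ)) := by
    funext θ'
    rw [CL_apply]
    have := hMcausal t (f θ') (fun s => if h : s < t+1 then f θ' s else 0) ?_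
    · exact congrFun this i
    · intro s hs
      simp [Nat.lt_succ_of_le hs]
  rw [heq]
  exact (CL M t i).hasFDerivAt.comp θ
    (hasFDerivAt_pi.2 fun k => ((hf (k : ℕ)) θ).hasFDerivAt)

lemma M_fderiv_apply {n : ℕ} (M : (ℕ → ℝ) →ₗ[ℝ] (ℕ → Fin n → ℝ))
    (hMcausal : ∀ (t : ℕ) (x x' : ℕ → ℝ), (∀ s ≤ t, x s = x' s) → M x t = M x' t)
    (t : ℕ) (i : Fin n) (f : (Fin n → ℝ) → ℕ → ℝ) (θ u : Fin n → ℝ) :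
    ((CL M t i).comp
        (ContinuousLinearMap.pi (fun k : Fin (t+1) => fderiv ℝ (fun θ' => f θ' (k : ℕ)) θ))) u
      = M (fun s => fderiv ℝ (fun θ' => f θ' s) θ u) t i := by
  rw [ContinuousLinearMap.comp_apply, CL_apply]
  have := hMcausal t (fun s => if h : s < t+1 then fderiv ℝ (fun θ' => f θ' s) θ u else 0)
    (fun s => fderiv ℝ (fun θ' => f θ' s) θ u) ?_
  · exact congrFun this i
  · intro s hs; simp [Nat.lt_succ_of_le hs]

/-- In the pseudo-linear regression framework (with
`Q(q⁻¹,θ̂) = 1 + θ̂ᵀ ∂φ/∂(qε)`, `∂φ/∂(qε) = M` independent of `θ̂`), the equivalent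
prediction error `ε_E(t+1) = Q ε(t+1) + (1-Q) e(t+1) = ε(t+1) + θ̂ᵀ M(q(ε-e))(t)` has
gradient `∂ε_E(t+1)/∂θ̂ = -φ(t) + (∂φ/∂(qε))(ε(t+1)-e(t+1))`, and consequently the
equivalent regressor `φ_E(t) = -∂ε_E(t+1)/∂θ̂` does not depend on `θ̂`. -/
theorem stmt_16 {n : ℕ}
    (y e : ℕ → ℝ) (ψ : ℕ → Fin n → ℝ)
    (M : (ℕ → ℝ) →ₗ[ℝ] (ℕ → Fin n → ℝ))
    (hMcausal : ∀ (t : ℕ) (x x' : ℕ → ℝ), (∀ s ≤ t, x s = x' s) → M x t = M x' t)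
    (ε : (Fin n → ℝ) → ℕ → ℝ) (φ : (Fin n → ℝ) → ℕ → Fin n → ℝ)
    (hφ : ∀ θ t, φ θ t = ψ t + M (fun s => ε θ (s + 1)) t)
    (hrel : ∀ θ t, ε θ (t + 1) = y (t + 1) - ∑ i, θ i * φ θ t i)
    (hdiff : ∀ t, Differentiable ℝ (fun θ : Fin n → ℝ => ε θ t))
    (εE : (Fin n → ℝ) → ℕ → ℝ)
    (hεE : ∀ θ t, εE θ (t + 1) = ε θ (t + 1)
      + ∑ j, θ j * M (fun s => ε θ (s + 1) - e (s + 1)) t j)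
    (φE : (Fin n → ℝ) → ℕ → Fin n → ℝ)
    (hφE : ∀ θ t i,
      φE θ t i = -((fderiv ℝ (fun θ' => εE θ' (t + 1)) θ) (Pi.single i 1))) :
    (∀ (θ : Fin n → ℝ) (t : ℕ) (i : Fin n),
        (fderiv ℝ (fun θ' => εE θ' (t + 1)) θ) (Pi.single i 1)
          = -φ θ t i + M (fun s => ε θ (s + 1) - e (s + 1)) t i) ∧
    (∀ (θ₁ θ₂ : Fin n → ℝ) (t : ℕ) (i : Fin n), φE θ₁ t i = φE θ₂ t i) := by
  have key : ∀ (θ : Fin n → ℝ) (t : ℕ) (i : Fin n),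
      (fderiv ℝ (fun θ' => εE θ' (t + 1)) θ) (Pi.single i 1)
        = -φ θ t i + M (fun s => ε θ (s + 1) - e (s + 1)) t i := by
    intro θ t i
    have hf1 : ∀ s, Differentiable ℝ fun θ' : Fin n → ℝ => ε θ' (s+1) - e (s+1) :=
      fun s => (hdiff (s+1)).sub_const _
    have hf2 : ∀ s, Differentiable ℝ fun θ' : Fin n → ℝ => ε θ' (s+1) := fun s => hdiff (s+1)
    set Lg : Fin n → (Fin n → ℝ) →L[ℝ] ℝ := fun j => (CL M t j).comp
      (ContinuousLinearMap.pi fun k : Fin (t+1) =>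
        fderiv ℝ (fun θ' => ε θ' ((k:ℕ)+1) - e ((k:ℕ)+1)) θ) with hLgdef
    set Lm : Fin n → (Fin n → ℝ) →L[ℝ] ℝ := fun j => (CL M t j).comp
      (ContinuousLinearMap.pi fun k : Fin (t+1) =>
        fderiv ℝ (fun θ' => ε θ' ((k:ℕ)+1)) θ) with hLmdef
    have hg : ∀ j, HasFDerivAt (fun θ' => M (fun s => ε θ' (s+1) - e (s+1)) t j) (Lg j) θ :=
      fun j => M_hasFDerivAt M hMcausal t j (fun θ' s => ε θ' (s+1) - e (s+1)) hf1 θ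
    have hm : ∀ j, HasFDerivAt (fun θ' => M (fun s => ε θ' (s+1)) t j) (Lm j) θ :=
      fun j => M_hasFDerivAt M hMcausal t j (fun θ' s => ε θ' (s+1)) hf2 θ
    have hLmapp : ∀ j u, Lm j u = M (fun s => fderiv ℝ (fun θ' => ε θ' (s+1)) θ u) t j :=
      fun j u => M_fderiv_apply M hMcausal t j (fun θ' s => ε θ' (s+1)) θ u
    have hLgapp : ∀ j u, Lg j u = M (fun s => fderiv ℝ (fun θ' => ε θ' (s+1)) θ u) t j := by
      intro j u
      refine (M_fderiv_apply M hMcausal t j (fun θ' s => ε θ' (s+1) - e (s+1)) θ u).trans ?_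
      have : (fun s => fderiv ℝ (fun θ' => ε θ' (s+1) - e (s+1)) θ u)
          = fun s => fderiv ℝ (fun θ' => ε θ' (s+1)) θ u := by
        funext s
        rw [fderiv_sub_const]
      rw [this]
    set D := fderiv ℝ (fun θ' => ε θ' (t+1)) θ with hDdef
    have hε : HasFDerivAt (fun θ' => ε θ' (t+1)) D θ := ((hdiff (t+1)) θ).hasFDerivAt
    have hRHS : HasFDerivAt
        (fun θ' : Fin n → ℝ => y (t+1) - ∑ j, θ' j * (ψ t j + M (fun s => ε θ' (s+1)) t j))
        (-(∑ j, (θ j • Lm j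
          + (ψ t j + M (fun s => ε θ (s+1)) t j) • ContinuousLinearMap.proj j))) θ := by
      apply HasFDerivAt.const_sub
      exact HasFDerivAt.fun_sum (fun j _ => (hasFDerivAt_apply j θ).mul ((hm j).const_add (ψ t j)))
    have hεeq : (fun θ' : Fin n → ℝ => ε θ' (t+1))
        = fun θ' => y (t+1) - ∑ j, θ' j * (ψ t j + M (fun s => ε θ' (s+1)) t j) := by
      funext θ'
      rw [hrel θ' t]
      simp only [hφ, Pi.add_apply]
    have hD' : HasFDerivAt (fun θ' : Fin n → ℝ => ε θ' (t+1))
        (-(∑ j, (θ j • Lm j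
          + (ψ t j + M (fun s => ε θ (s+1)) t j) • ContinuousLinearMap.proj j))) θ := by
      rw [hεeq]; exact hRHS
    have hDeq : D = -(∑ j, (θ j • Lm j
        + (ψ t j + M (fun s => ε θ (s+1)) t j) • ContinuousLinearMap.proj j)) :=
      hε.unique hD'
    have hEeq : (fun θ' : Fin n → ℝ => εE θ' (t+1))
        = fun θ' => ε θ' (t+1) + ∑ j, θ' j * M (fun s => ε θ' (s+1) - e (s+1)) t j :=
      funext fun θ' => hεE θ' t
    have hE : HasFDerivAt (fun θ' : Fin n → ℝ => εE θ' (t+1))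
        (D + ∑ j, (θ j • Lg j
          + (M (fun s => ε θ (s+1) - e (s+1)) t j) • ContinuousLinearMap.proj j)) θ := by
      rw [hEeq]
      exact hε.add (HasFDerivAt.fun_sum fun j _ => (hasFDerivAt_apply j θ).mul (hg j))
    rw [hE.fderiv]
    set u : Fin n → ℝ := Pi.single i 1 with hudef
    have hsum1 : ∑ j, (ψ t j + M (fun s => ε θ (s+1)) t j) * u j = φ θ t i := by
      rw [Finset.sum_eq_single i]
      · simp [hudef, hφ]
      · intro b _ hb; simp [hudef, Pi.single_apply, hb]
      · simp
    have hsum2 : ∑ j, M (fun s => ε θ (s+1) - e (s+1)) t j * u j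
        = M (fun s => ε θ (s+1) - e (s+1)) t i := by
      rw [Finset.sum_eq_single i]
      · simp [hudef]
      · intro b _ hb; simp [hudef, Pi.single_apply, hb]
      · simp
    simp only [hDeq, ContinuousLinearMap.add_apply, ContinuousLinearMap.neg_apply,
      ContinuousLinearMap.coe_sum', Finset.sum_apply, ContinuousLinearMap.smul_apply,
      ContinuousLinearMap.proj_apply, smul_eq_mul]
    rw [Finset.sum_add_distrib, Finset.sum_add_distrib, hsum1, hsum2]
    have hLL : ∑ j, θ j * (Lg j) u = ∑ j, θ j * (Lm j) u := by
      apply Finset.sum_congr rfl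
      intro j _
      rw [hLgapp, hLmapp]
    rw [hLL]
    ring
  refine ⟨key, ?_⟩
  intro θ₁ θ₂ t i
  have hconst : ∀ θ : Fin n → ℝ, φE θ t i = ψ t i + M (fun s => e (s+1)) t i := by
    intro θ
    rw [hφE, key]
    have hsub : M (fun s => ε θ (s+1) - e (s+1)) t i
        = M (fun s => ε θ (s+1)) t i - M (fun s => e (s+1)) t i := by
      have : (fun s => ε θ (s+1) - e (s+1))
          = (fun s => ε θ (s+1)) - (fun s => e (s+1)) := rfl
      rw [this, map_sub]
      rfl
    rw [hsub, hφ]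
    simp only [Pi.add_apply]
    ring
  rw [hconst θ₁, hconst θ₂]
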